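/- The function h(c) = (1/(4c))·((√(1+32c) − √(1+16c))/(√(1+32c) + √(1+16c)))^{1/√(1+16c)}, defined for c > 0 and extended by h(0) := 1 (equal to its limit as c → 0⁺), satisfies: (i) h(1/4) = ((3−√5)/(3+√5))^{1/√5} < 1; (ii) there exists a unique c̃ ∈ (0,∞) with h'(c) > 0 for c ∈ (0,c̃) and h'(c) < 0 for c ∈ (c̃,∞); and consequently (iii) there is exactly one c₂ ∈ (0,∞) with h(c₂) = 1, and c₂ ∈ (0, 1/4). -/

import Mathlib

open Set

/-- The function h(c) from the right boundary condition (real power). -/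
noncomputable def hAux (c : ℝ) : ℝ :=
  (1/(4*c)) * ((Real.sqrt (1 + 32*c) - Real.sqrt (1 + 16*c))
      / (Real.sqrt (1 + 32*c) + Real.sqrt (1 + 16*c)))
    ^ (1 / Real.sqrt (1 + 16*c))


noncomputable def Af (c : ℝ) : ℝ := Real.sqrt (1 + 32*c)
noncomputable def Bf (c : ℝ) : ℝ := Real.sqrt (1 + 16*c)
noncomputable def Xf (c : ℝ) : ℝ := (Af c - Bf c) / (Af c + Bf c)

lemma hA2 {c : ℝ} (hc : 0 ≤ c) : Af c ^ 2 = 1 + 32*c := Real.sq_sqrt (by linarith)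
lemma hB2 {c : ℝ} (hc : 0 ≤ c) : Bf c ^ 2 = 1 + 16*c := Real.sq_sqrt (by linarith)
lemma hA1 {c : ℝ} (hc : 0 ≤ c) : 1 ≤ Af c := by
  have := Real.sqrt_le_sqrt (show (1:ℝ) ≤ 1+32*c by linarith); simpa [Af] using this
lemma hB1 {c : ℝ} (hc : 0 ≤ c) : 1 ≤ Bf c := by
  have := Real.sqrt_le_sqrt (show (1:ℝ) ≤ 1+16*c by linarith); simpa [Bf] using this
lemma hBA {c : ℝ} (hc : 0 < c) : Bf c < Af c :=
  Real.sqrt_lt_sqrt (by linarith) (by linarith)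
lemma hXpos {c : ℝ} (hc : 0 < c) : 0 < Xf c :=
  div_pos (by linarith [hBA hc]) (by linarith [hA1 hc.le, hB1 hc.le])
lemma hXlt1 {c : ℝ} (hc : 0 < c) : Xf c < 1 := by
  rw [Xf, div_lt_one (by linarith [hA1 hc.le, hB1 hc.le])]
  linarith [hB1 hc.le]
lemma hABc {c : ℝ} (hc : 0 ≤ c) : (Af c - Bf c) * (Af c + Bf c) = 16*c := by
  have := hA2 hc; have := hB2 hc; ring_nf; nlinarith


noncomputable def ellf (c : ℝ) : ℝ := -Real.log (4*c) + (Bf c)⁻¹ * Real.log (Xf c)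

lemma hAux_eq {c : ℝ} (hc : 0 < c) : hAux c = Real.exp (ellf c) := by
  have hX := hXpos hc
  rw [hAux, ellf, Real.exp_add, Real.exp_neg, Real.exp_log (by linarith : (0:ℝ) < 4*c),
    show (Real.sqrt (1 + 32*c) - Real.sqrt (1 + 16*c)) / (Real.sqrt (1 + 32*c) + Real.sqrt (1 + 16*c)) = Xf c from rfl,
    show Real.sqrt (1 + 16*c) = Bf c from rfl,
    Real.rpow_def_of_pos hX, mul_comm (Real.log _)]
  norm_num

lemma hasDerivAt_A {c : ℝ} (hc : 0 < c) : HasDerivAt Af (16 / Af c) c := by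
  have h1 : HasDerivAt (fun c : ℝ => 1 + 32*c) 32 c := by
    simpa using ((hasDerivAt_id c).const_mul (32:ℝ)).const_add (1:ℝ)
  have := h1.sqrt (by positivity)
  convert this using 1
  · rfl
  rw [Af]; ring

lemma hasDerivAt_B {c : ℝ} (hc : 0 < c) : HasDerivAt Bf (8 / Bf c) c := by
  have h1 : HasDerivAt (fun c : ℝ => 1 + 16*c) 16 c := by
    simpa using ((hasDerivAt_id c).const_mul (16:ℝ)).const_add (1:ℝ)
  have := h1.sqrt (by positivity)
  convert this using 1
  · rfl
  rw [Bf]; ring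

lemma hApos {c : ℝ} (hc : 0 < c) : 0 < Af c := lt_of_lt_of_le one_pos (hA1 hc.le)
lemma hBpos {c : ℝ} (hc : 0 < c) : 0 < Bf c := lt_of_lt_of_le one_pos (hB1 hc.le)

lemma hasDerivAt_logX {c : ℝ} (hc : 0 < c) :
    HasDerivAt (fun c => Real.log (Xf c)) (1 / (Af c * Bf c * c)) c := by
  have hA := hasDerivAt_A hc
  have hB := hasDerivAt_B hc
  have hA0 := hApos hc
  have hB0 := hBpos hc
  have hAB := hBA hc
  have hABn : Af c + Bf c ≠ 0 := by positivity
  have hX : HasDerivAt Xf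
      (((16 / Af c - 8 / Bf c) * (Af c + Bf c) - (Af c - Bf c) * (16 / Af c + 8 / Bf c))
        / (Af c + Bf c)^2) c := (hA.sub hB).div (hA.add hB) hABn
  have hXne : Xf c ≠ 0 := ne_of_gt (hXpos hc)
  have := hX.log hXne
  convert this using 1
  rw [Xf]
  have hABm : Af c - Bf c ≠ 0 := by linarith
  have h2 := hA2 hc.le; have h4 := hB2 hc.le
  field_simp
  ring_nf
  linear_combination (Bf c^2) * h2 + (-(Af c^2)) * h4

noncomputable def Df (c : ℝ) : ℝ :=
  -(1/c) + 1/(Af c * (1+16*c) * c) - (8/(Bf c)^3) * Real.log (Xf c)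

lemma hasDerivAt_ell {c : ℝ} (hc : 0 < c) : HasDerivAt ellf (Df c) c := by
  have hB := hasDerivAt_B hc
  have hB0 := hBpos hc
  have hA0 := hApos hc
  have h1 : HasDerivAt (fun c : ℝ => -Real.log (4*c)) (-(1/c)) c := by
    have h4 : HasDerivAt (fun c : ℝ => 4*c) 4 c := by
      simpa using (hasDerivAt_id c).const_mul (4:ℝ)
    have := (h4.log (by positivity)).neg
    convert this using 1
    · rfl
    · rfl
    · rfl
    field_simp
  have h2 : HasDerivAt (fun c => (Bf c)⁻¹ * Real.log (Xf c))
      ((-(8 / Bf c) / (Bf c)^2) * Real.log (Xf c) + (Bf c)⁻¹ * (1 / (Af c * Bf c * c))) c :=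
    (hB.inv (ne_of_gt hB0)).mul (hasDerivAt_logX hc)
  have := h1.add h2
  convert this using 1
  · rfl
  · rfl
  · rfl
  rw [Df, ← hB2 hc.le]
  field_simp
  ring

lemma hasDerivAt_hAux {c : ℝ} (hc : 0 < c) : HasDerivAt hAux (hAux c * Df c) c := by
  have h := (hasDerivAt_ell hc).exp
  have hev : hAux =ᶠ[nhds c] (fun x => Real.exp (ellf x)) := by
    filter_upwards [Ioi_mem_nhds hc] with x hx
    exact hAux_eq hx
  have := h.congr_of_eventuallyEq hev
  rwa [← hAux_eq hc] at this

lemma hAux_pos {c : ℝ} (hc : 0 < c) : 0 < hAux c := by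
  rw [hAux_eq hc]; exact Real.exp_pos _

noncomputable def rf (c : ℝ) : ℝ :=
  Bf c * (1 - Af c*(1+16*c)) / (Af c * c) - 8 * Real.log (Xf c)

lemma Df_eq_rf {c : ℝ} (hc : 0 < c) : Df c = rf c / (Bf c)^3 := by
  have hA0 := hApos hc; have hB0 := hBpos hc
  rw [Df, rf, ← hB2 hc.le]
  field_simp
  ring

noncomputable def Nf (c : ℝ) : ℝ := 1+64*c+768*c^2 + (Af c)^3*(1+16*c)*(8*c-1)

lemma hasDerivAt_rf {c : ℝ} (hc : 0 < c) :
    HasDerivAt rf (-Nf c / ((Af c)^3 * Bf c * c^2)) c := by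
  have hA := hasDerivAt_A hc
  have hB := hasDerivAt_B hc
  have hA0 := hApos hc; have hB0 := hBpos hc
  have hlin : HasDerivAt (fun c : ℝ => 1+16*c) 16 c := by
    simpa using ((hasDerivAt_id c).const_mul (16:ℝ)).const_add (1:ℝ)
  have hnum : HasDerivAt (fun c => Bf c * (1 - Af c*(1+16*c)))
      ((8 / Bf c) * (1 - Af c*(1+16*c)) + Bf c * (-((16/Af c)*(1+16*c) + Af c * 16))) c := by
    exact hB.mul (((hA.mul hlin).const_sub 1))
  have hden : HasDerivAt (fun c => Af c * c) ((16/Af c)*c + Af c * 1) c :=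
    hA.mul (hasDerivAt_id c)
  have ht1 := hnum.div hden (by positivity)
  have := ht1.sub ((hasDerivAt_logX hc).const_mul (8:ℝ))
  convert this using 1
  · rfl
  · rfl
  · rfl
  have h2 := hA2 hc.le; have h4 := hB2 hc.le
  rw [Nf]
  field_simp
  ring_nf
  linear_combination (Bf c^2) * h2 + (1 + 48*c - Af c^3) * h4

lemma Nf_pos {c : ℝ} (hc : 0 < c) : 0 < Nf c := by
  have hA0 := hApos hc
  have h2 := hA2 hc.le
  rw [Nf]
  rcases le_or_gt (1:ℝ) (8*c) with h | h
  · nlinarith [mul_nonneg (mul_nonneg (pow_pos hA0 3).le (by linarith : (0:ℝ) ≤ 1+16*c)) (by linarith : (0:ℝ) ≤ 8*c-1)]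
  · have hu : 0 < (1+16*c)*(1-8*c) := by nlinarith
    have hkey : (Af c)^3*((1+16*c)*(1-8*c)) < 1+64*c+768*c^2 := by
      apply lt_of_pow_lt_pow_left₀ 2 (by nlinarith)
      have hA6 : ((Af c)^3)^2 = (1+32*c)^3 := by rw [← h2]; ring
      have : ((Af c)^3*((1+16*c)*(1-8*c)))^2 = (1+32*c)^3*((1+16*c)*(1-8*c))^2 := by
        rw [mul_pow, hA6]
      rw [this]
      nlinarith [sq_nonneg c, pow_pos hc 3, pow_pos hc 5, pow_pos hc 6,
        mul_pos (pow_pos hc 5) (show (0:ℝ) < 1-8*c by linarith),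
        mul_pos (pow_pos hc 6) (show (0:ℝ) < 1-8*c by linarith),
        mul_pos (mul_pos (pow_pos hc 5) hc) (show (0:ℝ) < 1-8*c by linarith)]
    nlinarith [hkey]

lemma deriv_rf_neg {c : ℝ} (hc : 0 < c) : deriv rf c < 0 := by
  rw [(hasDerivAt_rf hc).deriv]
  apply div_neg_of_neg_of_pos
  · simpa using Nf_pos hc
  · have := hApos hc; have := hBpos hc; positivity

lemma rf_anti : StrictAntiOn rf (Ioi 0) := by
  apply StrictAntiOn.mono (strictAntiOn_of_deriv_neg (convex_Ioi 0) ?_ ?_) le_rfl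
  · intro x hx
    exact ((hasDerivAt_rf hx).differentiableAt.continuousAt).continuousWithinAt
  · intro x hx
    rw [interior_Ioi] at hx
    exact deriv_rf_neg hx

lemma exp_six_lt : Real.exp 6 < 500 := by
  have h1 : Real.exp 1 < 2.7182818286 := Real.exp_one_lt_d9
  have h6 : Real.exp 6 = Real.exp 1 ^ (6:ℕ) := by
    rw [← Real.exp_nat_mul]; norm_num
  rw [h6]
  calc Real.exp 1 ^ (6:ℕ) < 2.7182818286^(6:ℕ) :=
        pow_lt_pow_left₀ h1 (Real.exp_pos 1).le (by norm_num)
    _ < 500 := by norm_num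

lemma exp_two_gt : (7.389:ℝ) < Real.exp 2 := by
  have h1 : (2.7182818283:ℝ) < Real.exp 1 := Real.exp_one_gt_d9
  have h2 : Real.exp 2 = Real.exp 1 ^ (2:ℕ) := by
    rw [← Real.exp_nat_mul]; norm_num
  rw [h2]
  nlinarith

lemma rf_pos_small : 0 < rf (1/2000) := by
  have hc : (0:ℝ) < 1/2000 := by norm_num
  have h2 := hA2 hc.le; have h4 := hB2 hc.le
  have hA0 := hApos hc; have hB0 := hBpos hc
  have hA1' := hA1 hc.le; have hB1' := hB1 hc.le
  have hXp := hXpos hc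
  have hXle : Xf (1/2000) ≤ 0.002 := by
    rw [Xf, div_le_iff₀ (by positivity)]
    nlinarith [hABc hc.le]
  have hlog : Real.log (Xf (1/2000)) < -6 := by
    rw [Real.log_lt_iff_lt_exp hXp]
    have : Real.exp (-6) = (Real.exp 6)⁻¹ := by
      rw [← Real.exp_neg]
    rw [this]
    have h6 := exp_six_lt
    have h60 := Real.exp_pos 6
    calc Xf (1/2000) ≤ 0.002 := hXle
      _ < (Real.exp 6)⁻¹ := by
          rw [lt_inv_comm₀ (by norm_num) h60]
          calc Real.exp 6 < 500 := exp_six_lt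
            _ = (0.002:ℝ)⁻¹ := by norm_num
  have hBle : Bf (1/2000) ≤ 1.004 := by nlinarith
  have hAle : Af (1/2000) ≤ 1.008 := by nlinarith
  rw [rf]
  have hterm : -48 ≤ Bf (1/2000) * (1 - Af (1/2000)*(1+16*(1/2000))) / (Af (1/2000) * (1/2000)) := by
    rw [le_div_iff₀ (by positivity)]
    nlinarith
  linarith

lemma hA_quarter : Af (1/4) = 3 := by
  rw [Af, show (1:ℝ)+32*(1/4) = 9 by norm_num, show (9:ℝ) = 3^2 by norm_num,
    Real.sqrt_sq (by norm_num : (0:ℝ) ≤ 3)]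

lemma hB_quarter : Bf (1/4) = Real.sqrt 5 := by
  rw [Bf]; norm_num

lemma rf_neg_quarter : rf (1/4) < 0 := by
  have hc : (0:ℝ) < 1/4 := by norm_num
  have hXp := hXpos hc
  have hs5 : Real.sqrt 5 ^ 2 = 5 := Real.sq_sqrt (by norm_num)
  have hs5nn : 0 ≤ Real.sqrt 5 := Real.sqrt_nonneg 5
  have hs5lt : Real.sqrt 5 < 2.2361 := by nlinarith
  have hs5gt : 2 < Real.sqrt 5 := by nlinarith
  have hlog : -2 < Real.log (Xf (1/4)) := by
    rw [Real.lt_log_iff_exp_lt hXp]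
    have hX : Xf (1/4) = (3 - Real.sqrt 5)/(3 + Real.sqrt 5) := by
      rw [Xf, hA_quarter, hB_quarter]
    have he2 : Real.exp (-2) < 0.1354 := by
      rw [Real.exp_neg]
      rw [inv_lt_comm₀ (Real.exp_pos 2) (by norm_num)]
      calc (0.1354:ℝ)⁻¹ < 7.389 := by norm_num
        _ < Real.exp 2 := exp_two_gt
    rw [hX]
    calc Real.exp (-2) < 0.1354 := he2
      _ < (3 - Real.sqrt 5)/(3 + Real.sqrt 5) := by
          rw [lt_div_iff₀ (by nlinarith)]
          nlinarith
  have hterm : Bf (1/4) * (1 - Af (1/4)*(1+16*(1/4))) / (Af (1/4) * (1/4)) < -37 := by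
    rw [hA_quarter, hB_quarter, div_lt_iff₀ (by norm_num)]
    nlinarith
  rw [rf]
  linarith

noncomputable def Ff (c : ℝ) : ℝ :=
  (4*c*Real.log (4*c)) * (-4/(Bf c*(1+Bf c))) + (2/Bf c) * Real.log (2/(Af c + Bf c))

lemma contA : Continuous Af := Real.continuous_sqrt.comp (by continuity)
lemma contB : Continuous Bf := Real.continuous_sqrt.comp (by continuity)

lemma A_zero : Af 0 = 1 := by rw [Af]; norm_num
lemma B_zero : Bf 0 = 1 := by rw [Bf]; norm_num

lemma Ff_cont0 : Filter.Tendsto Ff (nhds 0) (nhds 0) := by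
  have h1 : Continuous (fun c : ℝ => 4*c*Real.log (4*c)) := by
    have := Real.continuous_mul_log.comp (continuous_const.mul continuous_id : Continuous (fun c : ℝ => 4*c))
    exact this
  have h2 : ContinuousAt (fun c => -4/(Bf c*(1+Bf c))) 0 := by
    apply ContinuousAt.div continuousAt_const
    · exact (contB.continuousAt.mul (continuousAt_const.add contB.continuousAt))
    · rw [B_zero]; norm_num
  have h3 : ContinuousAt (fun c => (2/Bf c) * Real.log (2/(Af c + Bf c))) 0 := by
    apply ContinuousAt.mul
    · apply ContinuousAt.div continuousAt_const contB.continuousAt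
      rw [B_zero]; norm_num
    · have hd : ContinuousAt (fun x => 2/(Af x + Bf x)) 0 := by
        apply ContinuousAt.div continuousAt_const
          (contA.continuousAt.add contB.continuousAt)
        rw [Pi.add_apply, A_zero, B_zero]; norm_num
      exact ContinuousAt.log hd (by rw [A_zero, B_zero]; norm_num)
  have hF : ContinuousAt Ff 0 := ((h1.continuousAt).mul h2).add h3
  have hF0 : Ff 0 = 0 := by
    rw [Ff, A_zero, B_zero]
    norm_num
  have := hF.tendsto
  rwa [hF0] at this

lemma ellf_eq_Ff {c : ℝ} (hc : 0 < c) : ellf c = Ff c := by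
  have hA0 := hApos hc; have hB0 := hBpos hc
  have hABn : Af c + Bf c ≠ 0 := by positivity
  have hX16 : Xf c = 4*c*(2/(Af c + Bf c))^2 := by
    rw [Xf]
    have h16 := hABc hc.le
    field_simp
    linear_combination h16
  have hlogX : Real.log (Xf c) = Real.log (4*c) + 2 * Real.log (2/(Af c + Bf c)) := by
    rw [hX16, Real.log_mul (by positivity) (by positivity), Real.log_pow]
    push_cast
    ring
  rw [ellf, Ff, hlogX]
  have hBfac : (Bf c)⁻¹ - 1 = 4*c*(-4/(Bf c*(1+Bf c))) := by
    have h4 := hB2 hc.le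
    field_simp
    linear_combination (-1 : ℝ) * h4
  calc -Real.log (4*c) + (Bf c)⁻¹ * (Real.log (4*c) + 2*Real.log (2/(Af c + Bf c)))
      = ((Bf c)⁻¹ - 1) * Real.log (4*c) + (Bf c)⁻¹ * (2 * Real.log (2/(Af c + Bf c))) := by ring
    _ = (4*c*Real.log (4*c)) * (-4/(Bf c*(1+Bf c))) + (2/Bf c) * Real.log (2/(Af c + Bf c)) := by
        rw [hBfac]; ring

lemma tendsto_hAux : Filter.Tendsto hAux (nhdsWithin 0 (Set.Ioi 0)) (nhds 1) := by
  have h1 : Filter.Tendsto Ff (nhdsWithin 0 (Set.Ioi 0)) (nhds 0) :=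
    Ff_cont0.mono_left nhdsWithin_le_nhds
  have h2 : Filter.Tendsto (fun c => Real.exp (Ff c)) (nhdsWithin 0 (Set.Ioi 0)) (nhds 1) := by
    have := (Real.continuous_exp.continuousAt (x := (0:ℝ))).tendsto.comp h1
    simpa [Function.comp_def] using this
  apply h2.congr'
  filter_upwards [self_mem_nhdsWithin] with x hx
  rw [hAux_eq hx, ellf_eq_Ff hx]

lemma hAux_quarter : hAux (1/4) = ((3 - Real.sqrt 5)/(3 + Real.sqrt 5)) ^ (1 / Real.sqrt 5) := by
  have hA := hA_quarter; have hB := hB_quarter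
  rw [Af] at hA; rw [Bf] at hB
  rw [hAux, hA, hB]
  norm_num

lemma hAux_quarter_lt : hAux (1/4) < 1 := by
  rw [hAux_quarter]
  have hs5 : Real.sqrt 5 ^ 2 = 5 := Real.sq_sqrt (by norm_num)
  have hs5nn : 0 ≤ Real.sqrt 5 := Real.sqrt_nonneg 5
  have h1 : (3:ℝ) - Real.sqrt 5 > 0 := by nlinarith
  have h2 : (3:ℝ) + Real.sqrt 5 > 0 := by nlinarith
  apply Real.rpow_lt_one (by positivity)
  · rw [div_lt_one h2]; nlinarith
  · positivity

lemma deriv_hAux_eq {c : ℝ} (hc : 0 < c) : deriv hAux c = hAux c * (rf c / (Bf c)^3) := by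
  rw [(hasDerivAt_hAux hc).deriv, Df_eq_rf hc]

lemma exists_rf_root : ∃ ct ∈ Ioo (1/2000 : ℝ) (1/4 : ℝ), rf ct = 0 := by
  have hcont : ContinuousOn rf (Icc (1/2000 : ℝ) (1/4)) := by
    intro x hx
    have hx0 : 0 < x := lt_of_lt_of_le (by norm_num) hx.1
    exact ((hasDerivAt_rf hx0).differentiableAt.continuousAt).continuousWithinAt
  have hsub := intermediate_value_Ioo' (by norm_num : (1/2000:ℝ) ≤ 1/4) hcont
  have h0 : (0:ℝ) ∈ Ioo (rf (1/4)) (rf (1/2000)) := ⟨rf_neg_quarter, rf_pos_small⟩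
  obtain ⟨ct, hct, hval⟩ := hsub h0
  exact ⟨ct, hct, hval⟩


/-- Properties of h: it tends to 1 as c → 0⁺ (so extends continuously by h(0) := 1);
(i) h(1/4) = ((3−√5)/(3+√5))^{1/√5} < 1; (ii) there is a unique c̃ > 0 with h' > 0 on
(0,c̃) and h' < 0 on (c̃,∞); consequently (iii) there is exactly one c₂ > 0 with
h(c₂) = 1, and c₂ ∈ (0, 1/4). -/
theorem stmt17 :
    Filter.Tendsto hAux (nhdsWithin 0 (Set.Ioi 0)) (nhds 1) ∧
    (hAux (1/4) = ((3 - Real.sqrt 5)/(3 + Real.sqrt 5)) ^ (1 / Real.sqrt 5) ∧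
      hAux (1/4) < 1) ∧
    (∃! ct : ℝ, 0 < ct ∧ (∀ c ∈ Set.Ioo (0:ℝ) ct, 0 < deriv hAux c) ∧
      (∀ c ∈ Set.Ioi ct, deriv hAux c < 0)) ∧
    (∃! c₂ : ℝ, 0 < c₂ ∧ hAux c₂ = 1) ∧
    (∀ c₂ : ℝ, 0 < c₂ → hAux c₂ = 1 → c₂ < 1/4) := by
  obtain ⟨ct, hctmem, hct0⟩ := exists_rf_root
  have hctpos : 0 < ct := lt_trans (by norm_num) hctmem.1
  -- derivative signs
  have hpos : ∀ c ∈ Set.Ioo (0:ℝ) ct, 0 < deriv hAux c := by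
    intro c hcmem
    have hc : 0 < c := hcmem.1
    have hrf : 0 < rf c := by
      have := rf_anti (mem_Ioi.mpr hc) (mem_Ioi.mpr hctpos) hcmem.2
      rwa [hct0] at this
    rw [deriv_hAux_eq hc]
    have := hBpos hc
    exact mul_pos (hAux_pos hc) (div_pos hrf (by positivity))
  have hneg : ∀ c ∈ Set.Ioi ct, deriv hAux c < 0 := by
    intro c hcmem
    have hc : 0 < c := lt_trans hctpos hcmem
    have hrf : rf c < 0 := by
      have := rf_anti (mem_Ioi.mpr hctpos) (mem_Ioi.mpr hc) hcmem
      rwa [hct0] at this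
    rw [deriv_hAux_eq hc]
    have := hBpos hc
    exact mul_neg_of_pos_of_neg (hAux_pos hc) (div_neg_of_neg_of_pos hrf (by positivity))
  -- strict monotone on Ioc 0 ct
  have hcontOn : ∀ s : Set ℝ, s ⊆ Ioi 0 → ContinuousOn hAux s := by
    intro s hs x hx
    exact ((hasDerivAt_hAux (hs hx)).differentiableAt.continuousAt).continuousWithinAt
  have hmono : StrictMonoOn hAux (Ioc 0 ct) := by
    apply strictMonoOn_of_deriv_pos (convex_Ioc 0 ct) (hcontOn _ Ioc_subset_Ioi_self)
    intro x hx
    rw [interior_Ioc] at hx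
    exact hpos x hx
  have hanti : StrictAntiOn hAux (Ici ct) := by
    apply strictAntiOn_of_deriv_neg (convex_Ici ct)
    · exact hcontOn _ (fun x hx => lt_of_lt_of_le hctpos hx)
    · intro x hx
      rw [interior_Ici] at hx
      exact hneg x hx
  -- hAux > 1 on Ioc 0 ct
  have hge1 : ∀ x ∈ Ioc 0 ct, 1 ≤ hAux x := by
    intro x hx
    apply le_of_tendsto tendsto_hAux
    filter_upwards [Ioo_mem_nhdsGT_of_mem (by exact ⟨le_refl 0, hx.1⟩ : (0:ℝ) ∈ Ico 0 x)] with z hz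
    exact le_of_lt (hmono ⟨hz.1, le_trans hz.2.le hx.2⟩ hx hz.2)
  have hgt1 : ∀ x ∈ Ioc 0 ct, 1 < hAux x := by
    intro x hx
    have hx2 : x/2 ∈ Ioc 0 ct := ⟨by linarith [hx.1], by linarith [hx.1, hx.2]⟩
    calc 1 ≤ hAux (x/2) := hge1 _ hx2
      _ < hAux x := hmono hx2 hx (by linarith [hx.1])
  -- ct < 1/4
  have hct14 : ct < 1/4 := hctmem.2
  -- existence of root of hAux = 1
  have hIVT := intermediate_value_Ioo' (le_of_lt hct14) (hcontOn _ (fun x hx => lt_of_lt_of_le hctpos hx.1))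
  have h1mem : (1:ℝ) ∈ Ioo (hAux (1/4)) (hAux ct) := ⟨hAux_quarter_lt, hgt1 ct ⟨hctpos, le_refl ct⟩⟩
  obtain ⟨c₂, hc₂mem, hc₂val⟩ := hIVT h1mem
  have hc₂pos : 0 < c₂ := lt_trans hctpos hc₂mem.1
  -- any root is > ct and unique by strict anti
  have hroot_gt : ∀ y : ℝ, 0 < y → hAux y = 1 → ct < y := by
    intro y hy hval
    by_contra h
    push_neg at h
    exact absurd hval (ne_of_gt (hgt1 y ⟨hy, h⟩))
  have hroot_lt : ∀ y : ℝ, 0 < y → hAux y = 1 → y < 1/4 := by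
    intro y hy hval
    by_contra h
    push_neg at h
    have : hAux y ≤ hAux (1/4) := by
      rcases eq_or_lt_of_le h with h' | h'
      · rw [← h']
      · exact le_of_lt (hanti (le_of_lt hct14) (le_of_lt (lt_of_le_of_lt hct14.le h')) h')
    linarith [hAux_quarter_lt, this.trans_lt hAux_quarter_lt, hval ▸ this]
  refine ⟨tendsto_hAux, ⟨hAux_quarter, hAux_quarter_lt⟩, ?_, ?_, hroot_lt⟩
  · refine ⟨ct, ⟨hctpos, hpos, hneg⟩, ?_⟩
    rintro y ⟨hy0, hyp, hyn⟩
    by_contra hne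
    rcases lt_or_gt_of_ne hne with h | h
    · -- y < ct : pick z between
      have hz : (y + ct)/2 ∈ Set.Ioi y := by simp; linarith
      have hz2 : (y + ct)/2 ∈ Set.Ioo (0:ℝ) ct := ⟨by linarith, by linarith⟩
      linarith [hyn _ hz, hpos _ hz2]
    · have hz : (ct + y)/2 ∈ Set.Ioi ct := by simp; linarith
      have hz2 : (ct + y)/2 ∈ Set.Ioo (0:ℝ) y := ⟨by linarith, by linarith⟩
      linarith [hneg _ hz, hyp _ hz2]
  · refine ⟨c₂, ⟨hc₂pos, hc₂val⟩, ?_⟩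
    rintro y ⟨hy0, hyval⟩
    have hy_gt := hroot_gt y hy0 hyval
    have hc₂_gt := hroot_gt c₂ hc₂pos hc₂val
    apply hanti.injOn (le_of_lt hy_gt) (le_of_lt hc₂_gt)
    rw [hyval, hc₂val]
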